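/- Let T be a tree and let T_1,…,T_m be subtrees (connected subgraphs) of T that pairwise intersect. Then there is a node of T contained in all T_i (the Helly property of subtrees of a tree). -/

import Mathlib

open SimpleGraph Walk

/-- In an acyclic graph, any two vertices joined by paths and a third path
between the other endpoints have a common vertex (median-type lemma). -/
lemma tree_median {ι : Type} {T : SimpleGraph ι} (hT : T.IsAcyclic) {b : ι} :
    ∀ {a c : ι} (q : T.Walk a c), q.IsPath →
      ∀ (p : T.Walk a b), p.IsPath → ∀ (r : T.Walk b c), r.IsPath →
      ∃ x, x ∈ p.support ∧ x ∈ q.support ∧ x ∈ r.support := by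
  classical
  intro a c q
  induction q with
  | @nil a =>
      intro _ p _ r _
      exact ⟨a, p.start_mem_support, by simp, r.end_mem_support⟩
  | @cons a a' c hadj q' ih =>
      intro hq p hp r hr
      have hq' : q'.IsPath := hq.of_cons
      have haq' : a ∉ q'.support := ((Walk.cons_isPath_iff _ _).1 hq).2
      by_cases ha' : a' ∈ p.support
      · obtain ⟨x, hx1, hx2, hx3⟩ :=
          ih hq' (p.dropUntil a' ha') (hp.dropUntil ha') r hr
        exact ⟨x, p.support_dropUntil_subset ha' hx1, by simp [hx2], hx3⟩
      · -- p and (cons hadj q') share only the vertex a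
        have key : ∀ y, y ∈ p.support → y ∈ q'.support → False := by
          intro y hyp hyq
          -- two distinct paths from a to y
          have hy_ne : y ≠ a := fun h => haq' (h ▸ hyq)
          have h1 : (p.takeUntil y hyp).IsPath := hp.takeUntil hyp
          have h2 : (Walk.cons hadj (q'.takeUntil y hyq)).IsPath := by
            refine (hq'.takeUntil hyq).cons ?_
            intro ha
            exact haq' (q'.support_takeUntil_subset hyq ha)
          have := hT.path_unique ⟨p.takeUntil y hyp, h1⟩
            ⟨Walk.cons hadj (q'.takeUntil y hyq), h2⟩
          have hsup : (p.takeUntil y hyp).support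
              = (Walk.cons hadj (q'.takeUntil y hyq)).support := by
            have h3 : (p.takeUntil y hyp) = Walk.cons hadj (q'.takeUntil y hyq) := by
              simpa using Subtype.ext_iff.1 this
            rw [h3]
          have ha'mem : a' ∈ (p.takeUntil y hyp).support := by
            rw [hsup, Walk.support_cons]
            exact List.mem_cons_of_mem _ (q'.takeUntil y hyq).start_mem_support
          exact ha' (p.support_takeUntil_subset hyp ha'mem)
        -- the walk p.reverse ++ (cons hadj q') is a path from b to c
        have hw : (p.reverse.append (Walk.cons hadj q')).IsPath := by
          rw [Walk.isPath_def, Walk.support_append]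
          rw [Walk.support_cons, List.tail_cons]
          refine List.Nodup.append ?_ ?_ ?_
          · exact (Walk.isPath_def _).1 hp.reverse
          · exact (Walk.isPath_def _).1 hq'
          · intro y hy1 hy2
            exact key y (by simpa using hy1) hy2
        have := hT.path_unique ⟨p.reverse.append (Walk.cons hadj q'), hw⟩ ⟨r, hr⟩
        have hsup : (p.reverse.append (Walk.cons hadj q')).support = r.support := by
          have h3 : p.reverse.append (Walk.cons hadj q') = r := by
            simpa using Subtype.ext_iff.1 this
          rw [h3]
        have har : a ∈ r.support := by
          rw [← hsup]
          rw [Walk.mem_support_append_iff]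
          left; simpa using p.start_mem_support
        exact ⟨a, p.start_mem_support, Walk.start_mem_support _, har⟩

section Helly

variable {ι : Type} {T : SimpleGraph ι}

/-- A set is `Good` if any two of its vertices are joined by a path staying in it. -/
def GoodSet (T : SimpleGraph ι) (S : Set ι) : Prop :=
  ∀ u ∈ S, ∀ v ∈ S, ∃ p : T.Walk u v, p.IsPath ∧ ∀ x ∈ p.support, x ∈ S

lemma goodSet_of_connected {S : Set ι} (h : (T.induce S).Connected) :
    GoodSet T S := by
  classical
  intro u hu v hv
  obtain ⟨w⟩ := h ⟨u, hu⟩ ⟨v, hv⟩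
  let w' : T.Walk u v := w.map (SimpleGraph.Embedding.induce S).toHom
  refine ⟨(w'.toPath : T.Walk u v), (w'.toPath).2, fun x hx => ?_⟩
  have hx' : x ∈ w'.support := w'.support_toPath_subset hx
  change x ∈ (w.map (SimpleGraph.Embedding.induce S).toHom).support at hx'
  rw [Walk.support_map] at hx'
  obtain ⟨⟨y, hy⟩, _, rfl⟩ := List.mem_map.1 hx'
  exact hy

lemma goodSet_inter (hT : T.IsAcyclic) {A B : Set ι}
    (hA : GoodSet T A) (hB : GoodSet T B) : GoodSet T (A ∩ B) := by
  intro u hu v hv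
  obtain ⟨p, hp, hpA⟩ := hA u hu.1 v hv.1
  obtain ⟨q, hq, hqB⟩ := hB u hu.2 v hv.2
  have : p = q := by
    simpa using Subtype.ext_iff.1 (hT.path_unique ⟨p, hp⟩ ⟨q, hq⟩)
  exact ⟨p, hp, fun x hx => ⟨hpA x hx, hqB x (this ▸ hx)⟩⟩

lemma helly_three (hT : T.IsAcyclic) {A B C : Set ι}
    (hA : GoodSet T A) (hB : GoodSet T B) (hC : GoodSet T C)
    (hAB : (A ∩ B).Nonempty) (hBC : (B ∩ C).Nonempty) (hAC : (A ∩ C).Nonempty) :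
    (A ∩ B ∩ C).Nonempty := by
  obtain ⟨a, haA, haB⟩ := hAB
  obtain ⟨b, hbB, hbC⟩ := hBC
  obtain ⟨c, hcA, hcC⟩ := hAC
  obtain ⟨p, hp, hpB⟩ := hB a haB b hbB    -- p : a → b inside B
  obtain ⟨q, hq, hqA⟩ := hA a haA c hcA    -- q : a → c inside A
  obtain ⟨r, hr, hrC⟩ := hC b hbC c hcC    -- r : b → c inside C
  obtain ⟨x, hxp, hxq, hxr⟩ := tree_median hT q hq p hp r hr
  exact ⟨x, ⟨⟨hqA x hxq, hpB x hxp⟩, hrC x hxr⟩⟩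

lemma helly_good (hT : T.IsAcyclic) :
    ∀ (m : ℕ) (S : Fin (m + 1) → Set ι),
      (∀ j, GoodSet T (S j)) →
      (∀ j l, (S j ∩ S l).Nonempty) →
      ∃ i : ι, ∀ j, i ∈ S j := by
  intro m
  induction m with
  | zero =>
      intro S _ hpair
      obtain ⟨i, hi, _⟩ := hpair 0 0
      exact ⟨i, fun j => by rw [Fin.fin_one_eq_zero j]; exact hi⟩
  | succ m ih =>
      intro S hgood hpair
      set S' : Fin (m + 1) → Set ι :=
        fun j => S j.castSucc ∩ S (Fin.last (m + 1)) with hS'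
      have hgood' : ∀ j, GoodSet T (S' j) :=
        fun j => goodSet_inter hT (hgood _) (hgood _)
      have hpair' : ∀ j l, (S' j ∩ S' l).Nonempty := by
        intro j l
        obtain ⟨x, hx⟩ := helly_three hT (hgood j.castSucc) (hgood l.castSucc)
          (hgood (Fin.last (m + 1))) (hpair _ _) (hpair _ _) (hpair _ _)
        exact ⟨x, ⟨⟨hx.1.1, hx.2⟩, ⟨hx.1.2, hx.2⟩⟩⟩
      obtain ⟨i, hi⟩ := ih S' hgood' hpair'
      refine ⟨i, fun j => ?_⟩
      refine Fin.lastCases ?_ ?_ j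
      · exact (hi 0).2
      · exact fun k => (hi k).1

end Helly

/-- Helly property of subtrees of a tree: finitely many pairwise
intersecting subtrees (connected subgraphs) of a tree have a common node. -/
theorem helly_subtrees {ι : Type} (T : SimpleGraph ι) (hT : T.IsTree)
    (m : ℕ) (S : Fin m → Set ι)
    (hsub : ∀ j, (T.induce (S j)).Connected)
    (hpair : ∀ j l : Fin m, (S j ∩ S l).Nonempty) :
    ∃ i : ι, ∀ j, i ∈ S j := by
  cases m with
  | zero =>
      obtain ⟨i⟩ := hT.isConnected.nonempty
      exact ⟨i, fun j => j.elim0⟩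
  | succ k =>
      exact helly_good hT.IsAcyclic k S
        (fun j => goodSet_of_connected (hsub j)) hpair
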